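/- Let m and u be integers with 1 < u ≤ m and let Λ = {0, m} ∪ {n ∈ ℕ : n ≥ m+u}, a numerical semigroup of rank 2. Then the number of strong generators of Λ is u−1 if m < 2u, and u if m ≥ 2u. -/
import Mathlib


/-- A numerical semigroup: a cofinite submonoid of ℕ, viewed as a set of naturals. -/
def IsNumericalSemigroup (S : Set ℕ) : Prop :=
  0 ∈ S ∧ (∀ a ∈ S, ∀ b ∈ S, a + b ∈ S) ∧ ∃ N : ℕ, ∀ n : ℕ, N ≤ n → n ∈ S

/-- The conductor: the smallest `N` such that every `n ≥ N` belongs to `S`. -/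
noncomputable def sgConductor (S : Set ℕ) : ℕ :=
  sInf {N : ℕ | ∀ n : ℕ, N ≤ n → n ∈ S}

/-- The genus: the number of gaps. -/
noncomputable def sgGenus (S : Set ℕ) : ℕ :=
  Sᶜ.ncard

/-- The rank `k(Λ) = c(Λ) - g(Λ)`. -/
noncomputable def sgRank (S : Set ℕ) : ℕ :=
  sgConductor S - sgGenus S

/-- The multiplicity: the smallest nonzero element. -/
noncomputable def sgMultiplicity (S : Set ℕ) : ℕ :=
  sInf {n : ℕ | n ∈ S ∧ n ≠ 0}

/-- The Frobenius number: the largest gap, i.e. the conductor minus one. -/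
noncomputable def sgFrobenius (S : Set ℕ) : ℕ :=
  sgConductor S - 1

/-- `sgElem S j` is the element `λ_j` of `S = {λ_0 = 0 < λ_1 < λ_2 < ⋯}`. -/
noncomputable def sgElem (S : Set ℕ) (j : ℕ) : ℕ :=
  Nat.nth (· ∈ S) j

/-- The jump `u_j = λ_{j+1} - λ_j`. -/
noncomputable def sgJump (S : Set ℕ) (j : ℕ) : ℕ :=
  sgElem S (j + 1) - sgElem S j

/-- The left elements: elements of `S` smaller than the Frobenius number. -/
def sgLeftElements (S : Set ℕ) : Set ℕ :=
  {x : ℕ | x ∈ S ∧ x + 1 < sgConductor S}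

/-- A minimal generator: a nonzero element not the sum of two nonzero elements. -/
def IsMinimalGenerator (S : Set ℕ) (x : ℕ) : Prop :=
  x ∈ S ∧ x ≠ 0 ∧ ¬ ∃ a ∈ S, ∃ b ∈ S, a ≠ 0 ∧ b ≠ 0 ∧ a + b = x

/-- A right generator: a minimal generator larger than the Frobenius number. -/
def IsRightGenerator (S : Set ℕ) (x : ℕ) : Prop :=
  IsMinimalGenerator S x ∧ sgFrobenius S < x

/-- A strong generator: a right generator `μ` such that `μ + m(Λ)` is a minimal
generator of `Λ ∖ {μ}`. -/
noncomputable def IsStrongGenerator (S : Set ℕ) (x : ℕ) : Prop :=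
  IsRightGenerator S x ∧ IsMinimalGenerator (S \ {x}) (x + sgMultiplicity S)

/-- A new generator of `Λ`: a minimal generator of `Λ` that is not a minimal
generator of `Λ ∪ {F(Λ)}`. -/
noncomputable def IsNewGenerator (S : Set ℕ) (x : ℕ) : Prop :=
  IsMinimalGenerator S x ∧ ¬ IsMinimalGenerator (S ∪ {sgFrobenius S}) x

/-- `x` (an element `λ_s ≥ c(Λ)`) is an order-`p` seed of `Λ` if
`x + λ_p ≠ λ_i + λ_j` for all `p < i ≤ j < s`, i.e. for all `i ≤ j` with
`p < i` and `λ_j < x`. -/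
noncomputable def IsSeed (S : Set ℕ) (p x : ℕ) : Prop :=
  sgConductor S ≤ x ∧ ∀ i j : ℕ, p < i → i ≤ j → sgElem S j < x →
    x + sgElem S p ≠ sgElem S i + sgElem S j

/-- `T` is a child of `S`: obtained by removing one right generator. -/
def IsChild (T S : Set ℕ) : Prop :=
  ∃ μ : ℕ, IsRightGenerator S μ ∧ T = S \ {μ}

/-- A grandchild: a child of a child. -/
def IsGrandchild (T S : Set ℕ) : Prop :=
  ∃ C : Set ℕ, IsChild C S ∧ IsChild T C

/-- A great-grandchild: a child of a grandchild. -/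
def IsGreatGrandchild (T S : Set ℕ) : Prop :=
  ∃ C : Set ℕ, IsGrandchild C S ∧ IsChild T C

/-- `⟨a,b,c,…⟩|_κ`: the smallest numerical semigroup containing a given set. -/
def sgClosure (A : Set ℕ) : Set ℕ :=
  ⋂₀ {S : Set ℕ | IsNumericalSemigroup S ∧ A ⊆ S}


theorem statement14 (m u : ℕ) (hu : 1 < u) (hum : u ≤ m) :
    {μ : ℕ | IsStrongGenerator (({0, m} : Set ℕ) ∪ {n : ℕ | m + u ≤ n}) μ}.ncard =
      if m < 2 * u then u - 1 else u := by
  set S : Set ℕ := ({0, m} : Set ℕ) ∪ {n : ℕ | m + u ≤ n} with hS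
  have hmem : ∀ n, n ∈ S ↔ n = 0 ∨ n = m ∨ m + u ≤ n := by
    intro n
    simp only [hS, Set.mem_union, Set.mem_insert_iff, Set.mem_setOf_eq]
    tauto
  have hm2 : 2 ≤ m := by omega
  have hcond : sgConductor S = m + u := by
    unfold sgConductor
    apply le_antisymm
    · exact Nat.sInf_le (fun n hn => (hmem n).mpr (Or.inr (Or.inr hn)))
    · apply le_csInf (Set.nonempty_of_mem (show (m+u) ∈ {N : ℕ | ∀ n, N ≤ n → n ∈ S} from fun n hn => (hmem n).mpr (Or.inr (Or.inr hn))))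
      intro N hN
      by_contra h
      push_neg at h
      have : m + u - 1 ∈ S := hN _ (by omega)
      rcases (hmem _).mp this with h1 | h1 | h1 <;> omega
  have hfrob : sgFrobenius S = m + u - 1 := by rw [sgFrobenius, hcond]
  have hmult : sgMultiplicity S = m := by
    unfold sgMultiplicity
    apply le_antisymm
    · exact Nat.sInf_le ⟨(hmem m).mpr (Or.inr (Or.inl rfl)), by omega⟩
    · apply le_csInf (Set.nonempty_of_mem (show m ∈ {n : ℕ | n ∈ S ∧ n ≠ 0} from ⟨(hmem m).mpr (Or.inr (Or.inl rfl)), by omega⟩))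
      rintro b ⟨hb, hb0⟩
      rcases (hmem b).mp hb with h | h | h <;> omega
  have hchar : ∀ μ, IsStrongGenerator S μ ↔ (m + u ≤ μ ∧ μ < m + 2 * u ∧ μ ≠ 2 * m) := by
    intro μ
    unfold IsStrongGenerator IsRightGenerator IsMinimalGenerator
    rw [hfrob, hmult]
    constructor
    · rintro ⟨⟨⟨hμS, hμ0, hμnot⟩, hμF⟩, hmg⟩
      have h1 : m + u ≤ μ := by omega
      refine ⟨h1, ?_, ?_⟩
      · by_contra h
        push_neg at h
        apply hmg.2.2
        refine ⟨m + u, ⟨(hmem _).mpr (Or.inr (Or.inr le_rfl)), by simp; omega⟩,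
          μ - u, ⟨(hmem _).mpr (Or.inr (Or.inr (by omega))), by simp; omega⟩,
          by omega, by omega, by omega⟩
      · intro h3
        exact hμnot ⟨m, (hmem m).mpr (Or.inr (Or.inl rfl)), m,
          (hmem m).mpr (Or.inr (Or.inl rfl)), by omega, by omega, by omega⟩
    · rintro ⟨h1, h2, h3⟩
      have hμS : μ ∈ S := (hmem μ).mpr (Or.inr (Or.inr h1))
      refine ⟨⟨⟨hμS, by omega, ?_⟩, by omega⟩,
        ⟨(hmem _).mpr (Or.inr (Or.inr (by omega))), by simp; omega⟩, by omega, ?_⟩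
      · rintro ⟨a, ha, b, hb, ha0, hb0, hab⟩
        rcases (hmem a).mp ha with h | h | h <;> rcases (hmem b).mp hb with h' | h' | h' <;> omega
      · rintro ⟨a, ⟨ha, haμ⟩, b, ⟨hb, hbμ⟩, ha0, hb0, hab⟩
        simp only [Set.mem_singleton_iff] at haμ hbμ
        rcases (hmem a).mp ha with h | h | h <;> rcases (hmem b).mp hb with h' | h' | h' <;> omega
  have hset : {μ : ℕ | IsStrongGenerator S μ} =
      ↑(Finset.Ico (m + u) (m + 2 * u) \ {2 * m}) := by
    ext μ
    simp only [Set.mem_setOf_eq, hchar, Finset.coe_sdiff, Set.mem_diff, Finset.coe_Ico,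
      Set.mem_Ico, Finset.coe_singleton, Set.mem_singleton_iff]
    tauto
  rw [hset, Set.ncard_coe_finset]
  by_cases hcase : m < 2 * u
  · rw [if_pos hcase]
    rw [Finset.card_sdiff_of_subset (by simp [Finset.mem_Ico]; omega)]
    simp only [Nat.card_Ico, Finset.card_singleton]
    omega
  · rw [if_neg hcase]
    rw [Finset.sdiff_eq_self_of_disjoint (by simp [Finset.mem_Ico]; omega)]
    rw [Nat.card_Ico]
    omega
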